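/- Let g: ℝᵈ → ℝ be twice continuously differentiable with ‖D²g(y)‖ ≤ Q for all y (operator norm of the Hessian bounded by Q). Suppose g vanishes at points x₁,…,x_T ∈ ℝᵈ, and let x lie in the convex hull of a subset of these points whose pairwise distances are at most δ. Then |g(x)| ≤ Q δ² / 4. -/

import Mathlib

open Set Finset

lemma taylor2 {E : Type*} [NormedAddCommGroup E] [NormedSpace ℝ E]
    {g : E → ℝ} (hg : ContDiff ℝ 2 g) {Q : ℝ}
    (hQ : ∀ y, ‖iteratedFDeriv ℝ 2 g y‖ ≤ Q) (x y : E) :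
    |g y - g x - fderiv ℝ g x (y - x)| ≤ Q / 2 * ‖y - x‖ ^ 2 := by
  set v := y - x with hv
  set c : ℝ → E := fun t => x + t • v with hcdef
  have hcC : ContDiff ℝ 2 c := contDiff_const.add (contDiff_id.smul contDiff_const)
  have hcd : ∀ t : ℝ, HasDerivAt c v t := fun t => by
    simpa [hcdef] using ((hasDerivAt_id t).smul_const v).const_add x
  have hgd : Differentiable ℝ g := hg.differentiable (by norm_num)
  have hg1 : ContDiff ℝ 1 (fderiv ℝ g) := hg.fderiv_right (by norm_num)
  set h : ℝ → ℝ := fun t => g (c t) with hhd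
  have hd1 : ∀ t : ℝ, HasDerivAt h (fderiv ℝ g (c t) v) t :=
    fun t => (hgd (c t)).hasFDerivAt.comp_hasDerivAt t (hcd t)
  have hd2 : ∀ t : ℝ, HasDerivAt (fun t => fderiv ℝ g (c t) v)
      (fderiv ℝ (fderiv ℝ g) (c t) v v) t := by
    intro t
    have h1 : HasDerivAt (fun t => fderiv ℝ g (c t)) (fderiv ℝ (fderiv ℝ g) (c t) v) t :=
      ((hg1.differentiable one_ne_zero) (c t)).hasFDerivAt.comp_hasDerivAt t (hcd t)
    exact (ContinuousLinearMap.apply ℝ ℝ v).hasFDerivAt.comp_hasDerivAt t h1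
  have hbound : ∀ p : E, |fderiv ℝ (fderiv ℝ g) p v v| ≤ Q * ‖v‖ ^ 2 := by
    intro p
    have e : fderiv ℝ (fderiv ℝ g) p v v = iteratedFDeriv ℝ 2 g p ![v, v] := by
      rw [iteratedFDeriv_two_apply]; simp
    rw [e, ← Real.norm_eq_abs]
    calc ‖iteratedFDeriv ℝ 2 g p ![v, v]‖
        ≤ ‖iteratedFDeriv ℝ 2 g p‖ * ∏ i, ‖(![v, v]) i‖ :=
          (iteratedFDeriv ℝ 2 g p).le_opNorm _
      _ = ‖iteratedFDeriv ℝ 2 g p‖ * ‖v‖ ^ 2 := by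
          rw [Fin.prod_univ_two]; simp [sq]
      _ ≤ Q * ‖v‖ ^ 2 := by
          have := hQ p
          nlinarith [norm_nonneg v, norm_nonneg (iteratedFDeriv ℝ 2 g p)]
  have hu : UniqueDiffOn ℝ (Icc (0:ℝ) 1) := uniqueDiffOn_Icc zero_lt_one
  have heq1 : Set.EqOn (derivWithin h (Icc 0 1)) (fun t => fderiv ℝ g (c t) v) (Icc 0 1) :=
    fun t ht => by
      rw [(hd1 t).differentiableAt.derivWithin (hu t ht), (hd1 t).deriv]
  have hcont : ContDiffOn ℝ 1 h (Icc 0 1) :=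
    ((hg.of_le (by norm_num)).comp (hcC.of_le (by norm_num))).contDiffOn
  have hdiffOn : DifferentiableOn ℝ (iteratedDerivWithin 1 h (Icc 0 1)) (Ioo 0 1) := by
    have : DifferentiableOn ℝ (fun t => fderiv ℝ g (c t) v) (Ioo 0 1) :=
      fun t _ => ((hd2 t).differentiableAt).differentiableWithinAt
    refine this.congr ?_
    intro t ht
    rw [iteratedDerivWithin_one]
    exact heq1 (Ioo_subset_Icc_self ht)
  obtain ⟨t', ht', hrem⟩ := taylor_mean_remainder_lagrange (f := h) (n := 1) (x₀ := 0) (x := 1) zero_ne_one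
    (by rw [Set.uIcc_of_le zero_le_one]; exact_mod_cast hcont)
    (by rw [Set.uIcc_of_le zero_le_one, uIoo_of_le zero_le_one]; exact hdiffOn)
  rw [Set.uIcc_of_le zero_le_one] at hrem
  rw [uIoo_of_le zero_le_one] at ht'
  have ht'' : t' ∈ Icc (0:ℝ) 1 := Ioo_subset_Icc_self ht'
  have h2 : iteratedDerivWithin 2 h (Icc 0 1) t' = fderiv ℝ (fderiv ℝ g) (c t') v v := by
    have : iteratedDerivWithin 2 h (Icc 0 1) t'
        = derivWithin (iteratedDerivWithin 1 h (Icc 0 1)) (Icc 0 1) t' :=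
      congrFun iteratedDerivWithin_succ t'
    rw [this]
    have e2 : Set.EqOn (iteratedDerivWithin 1 h (Icc 0 1)) (fun t => fderiv ℝ g (c t) v)
        (Icc 0 1) := by
      intro t ht
      rw [iteratedDerivWithin_one]
      exact heq1 ht
    rw [derivWithin_congr e2 (e2 ht'')]
    rw [(hd2 t').differentiableAt.derivWithin (hu t' ht''), (hd2 t').deriv]
  have htay : taylorWithinEval h 1 (Icc 0 1) 0 1 = g x + fderiv ℝ g x v := by
    have e0 : iteratedDerivWithin 1 h (Icc 0 1) 0 = fderiv ℝ g x v := by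
      rw [iteratedDerivWithin_one]
      have := heq1 (show (0:ℝ) ∈ Icc (0:ℝ) 1 by norm_num)
      rw [this]
      simp [hcdef]
    rw [show (1:ℕ) = 0 + 1 from rfl, taylorWithinEval_succ, taylor_within_zero_eval, e0]
    simp [hhd, hcdef]
  have hh1 : h 1 = g y := by simp [hhd, hcdef, hv]
  have hh0 : h 0 = g x := by simp [hhd, hcdef]
  rw [hh1, htay] at hrem
  have : g y - (g x + fderiv ℝ g x v) = g y - g x - fderiv ℝ g x v := by ring
  rw [this] at hrem
  rw [hrem]
  have hb := hbound (c t')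
  rw [← h2] at hb
  have e : iteratedDerivWithin (1 + 1) h (Icc 0 1) t' * (1 - 0) ^ (1 + 1)
      / (((1 + 1).factorial : ℕ) : ℝ) = iteratedDerivWithin 2 h (Icc 0 1) t' / 2 := by
    norm_num [Nat.factorial]
  rw [e, abs_div, abs_two]
  linarith

/-- If `g : ℝᵈ → ℝ` is `C²` with Hessian (second derivative) uniformly bounded in
operator norm by `Q`, vanishes at sample points `x₁,…,x_T`, and `x` lies in the convex
hull of a subset `s` of the sample points whose pairwise distances are at most `δ`, then
`|g(x)| ≤ Q δ² / 4`. -/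
theorem second_derivative_bound_from_zeros
    {d T : ℕ} (Q δ : ℝ) (g : EuclideanSpace ℝ (Fin d) → ℝ)
    (hg : ContDiff ℝ 2 g)
    (hQ : ∀ y, ‖iteratedFDeriv ℝ 2 g y‖ ≤ Q)
    (xs : Fin T → EuclideanSpace ℝ (Fin d)) (hzero : ∀ i, g (xs i) = 0)
    (s : Set (EuclideanSpace ℝ (Fin d))) (hs : s ⊆ Set.range xs)
    (hdiam : ∀ y ∈ s, ∀ z ∈ s, dist y z ≤ δ)
    (x : EuclideanSpace ℝ (Fin d)) (hx : x ∈ convexHull ℝ s) :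
    |g x| ≤ Q * δ ^ 2 / 4 := by
  rw [_root_.convexHull_eq] at hx
  obtain ⟨ι, t, w, z, hw0, hw1, hzs, hxc⟩ := hx
  have hQ0 : 0 ≤ Q := le_trans (norm_nonneg _) (hQ x)
  have hxeq : x = ∑ i ∈ t, w i • z i := by
    rw [← hxc, Finset.centerMass_eq_of_sum_1 _ _ hw1]
  set u : ι → EuclideanSpace ℝ (Fin d) := fun i => z i - x with hu
  have hsum0 : ∑ i ∈ t, w i • u i = 0 := by
    simp only [hu, smul_sub]
    rw [Finset.sum_sub_distrib, ← Finset.sum_smul, hw1, one_smul, ← hxeq, sub_self]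
  have hgz : ∀ i ∈ t, g (z i) = 0 := by
    intro i hi
    obtain ⟨j, hj⟩ := hs (hzs i hi)
    rw [← hj]; exact hzero j
  set A := ∑ i ∈ t, w i * ‖u i‖ ^ 2 with hA
  have inner0 : ∀ i ∈ t, ∑ j ∈ t, w j * (inner ℝ (u i) (u j) : ℝ) = 0 := by
    intro i _
    have e : ∑ j ∈ t, w j * (inner ℝ (u i) (u j) : ℝ)
        = (inner ℝ (u i) (∑ j ∈ t, w j • u j) : ℝ) := by
      rw [inner_sum]
      exact Finset.sum_congr rfl fun j _ => (real_inner_smul_right _ _ _).symm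
    rw [e, hsum0, inner_zero_right]
  have expand : ∀ i j : ι, ‖u i - u j‖ ^ 2
      = ‖u i‖ ^ 2 - 2 * (inner ℝ (u i) (u j) : ℝ) + ‖u j‖ ^ 2 := by
    intro i j
    rw [@norm_sub_sq_real]
  have hrow : ∀ i ∈ t, ∑ j ∈ t, w i * w j * ‖u i - u j‖ ^ 2 = w i * (‖u i‖ ^ 2 + A) := by
    intro i hi
    have e : ∀ j ∈ t, w i * w j * ‖u i - u j‖ ^ 2
        = w i * (w j * ‖u i‖ ^ 2 - 2 * (w j * (inner ℝ (u i) (u j) : ℝ)) + w j * ‖u j‖ ^ 2) := by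
      intro j _
      rw [expand i j]; ring
    rw [Finset.sum_congr rfl e, ← Finset.mul_sum]
    congr 1
    rw [Finset.sum_add_distrib, Finset.sum_sub_distrib, ← Finset.sum_mul, hw1, one_mul,
      ← Finset.mul_sum, inner0 i hi]
    ring
  have S2 : ∑ i ∈ t, ∑ j ∈ t, w i * w j * ‖u i - u j‖ ^ 2 = 2 * A := by
    rw [Finset.sum_congr rfl hrow]
    simp_rw [mul_add]
    rw [Finset.sum_add_distrib, ← Finset.sum_mul, hw1, one_mul]
    ring
  have Sle : ∑ i ∈ t, ∑ j ∈ t, w i * w j * ‖u i - u j‖ ^ 2 ≤ δ ^ 2 := by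
    calc ∑ i ∈ t, ∑ j ∈ t, w i * w j * ‖u i - u j‖ ^ 2
        ≤ ∑ i ∈ t, ∑ j ∈ t, w i * w j * δ ^ 2 := by
          refine Finset.sum_le_sum fun i hi => Finset.sum_le_sum fun j hj => ?_
          have hzz : u i - u j = z i - z j := sub_sub_sub_cancel_right _ _ _
          have hd : ‖u i - u j‖ ≤ δ := by
            rw [hzz, ← dist_eq_norm]
            exact hdiam _ (hzs i hi) _ (hzs j hj)
          have hsq : ‖u i - u j‖ ^ 2 ≤ δ ^ 2 := by nlinarith [norm_nonneg (u i - u j)]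
          have hwij : 0 ≤ w i * w j := mul_nonneg (hw0 i hi) (hw0 j hj)
          exact mul_le_mul_of_nonneg_left hsq hwij
      _ = δ ^ 2 := by
          have e : ∀ i ∈ t, ∑ j ∈ t, w i * w j * δ ^ 2 = w i * δ ^ 2 := by
            intro i _
            have e2 : ∀ j ∈ t, w i * w j * δ ^ 2 = w i * δ ^ 2 * w j := fun j _ => by ring
            rw [Finset.sum_congr rfl e2, ← Finset.mul_sum, hw1, mul_one]
          rw [Finset.sum_congr rfl e, ← Finset.sum_mul, hw1, one_mul]
  have key : A ≤ δ ^ 2 / 2 := by linarith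
  have htl : ∀ i ∈ t, |g x + fderiv ℝ g x (u i)| ≤ Q / 2 * ‖u i‖ ^ 2 := by
    intro i hi
    have h1 := taylor2 hg hQ x (z i)
    rw [hgz i hi] at h1
    have e : 0 - g x - fderiv ℝ g x (z i - x) = -(g x + fderiv ℝ g x (u i)) := by
      simp only [hu]; ring
    rw [e, abs_neg] at h1
    exact h1
  have hgx : g x = ∑ i ∈ t, w i * (g x + fderiv ℝ g x (u i)) := by
    have h2 : ∑ i ∈ t, w i * fderiv ℝ g x (u i) = 0 := by
      have e : ∀ i ∈ t, w i * fderiv ℝ g x (u i) = fderiv ℝ g x (w i • u i) := by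
        intro i _
        rw [map_smul, smul_eq_mul]
      rw [Finset.sum_congr rfl e, ← map_sum, hsum0, map_zero]
    simp_rw [mul_add]
    rw [Finset.sum_add_distrib, h2, add_zero, ← Finset.sum_mul, hw1, one_mul]
  calc |g x| = |∑ i ∈ t, w i * (g x + fderiv ℝ g x (u i))| := by rw [← hgx]
    _ ≤ ∑ i ∈ t, |w i * (g x + fderiv ℝ g x (u i))| := Finset.abs_sum_le_sum_abs _ _
    _ ≤ ∑ i ∈ t, w i * (Q / 2 * ‖u i‖ ^ 2) := by
        refine Finset.sum_le_sum fun i hi => ?_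
        rw [abs_mul, abs_of_nonneg (hw0 i hi)]
        exact mul_le_mul_of_nonneg_left (htl i hi) (hw0 i hi)
    _ = Q / 2 * A := by
        rw [hA, Finset.mul_sum]
        exact Finset.sum_congr rfl fun i _ => by ring
    _ ≤ Q / 2 * (δ ^ 2 / 2) := mul_le_mul_of_nonneg_left key (by positivity)
    _ = Q * δ ^ 2 / 4 := by ring
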